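/- Let a, a', b, b' be finite index types, let X : Matrix b' b ℂ and Y : Matrix a' a ℂ, and let V : Matrix b a ℂ and W : Matrix b' a' ℂ satisfy Vᴴ·V = 1, V·Vᴴ = 1, Wᴴ·W = 1, W·Wᴴ = 1. If X·V = W·Y, then √(X·Xᴴ)·W = W·√(Y·Yᴴ), where √ denotes the positive semidefinite square root of the positive semidefinite matrices X·Xᴴ and Y·Yᴴ. -/

import Mathlib

open Matrix ComplexOrder

namespace Matrix.PosSemidef

/-- The positive semidefinite square root of a positive semidefinite matrix
(the definition `Matrix.PosSemidef.sqrt` of the older Mathlib, since removed). -/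
noncomputable def sqrt {n 𝕜 : Type*} [Fintype n] [RCLike 𝕜] [DecidableEq n] {A : Matrix n n 𝕜}
    (hA : PosSemidef A) : Matrix n n 𝕜 :=
  hA.1.eigenvectorUnitary.1 * diagonal ((↑) ∘ (√·) ∘ hA.1.eigenvalues) *
  (star hA.1.eigenvectorUnitary : Matrix n n 𝕜)

open scoped MatrixOrder in
lemma sqrt_eq_cfcSqrt {n 𝕜 : Type*} [Fintype n] [RCLike 𝕜] [DecidableEq n] {A : Matrix n n 𝕜}
    (hA : PosSemidef A) : hA.sqrt = CFC.sqrt A := by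
  rw [CFC.sqrt_eq_real_sqrt A hA.nonneg, cfcₙ_eq_cfc, hA.1.cfc_eq]
  simp [IsHermitian.cfc, sqrt, Function.comp_def]

open scoped MatrixOrder in
lemma posSemidef_sqrt {n 𝕜 : Type*} [Fintype n] [RCLike 𝕜] [DecidableEq n] {A : Matrix n n 𝕜}
    (hA : PosSemidef A) : hA.sqrt.PosSemidef := by
  rw [sqrt_eq_cfcSqrt]
  exact (CFC.sqrt_nonneg A).posSemidef

open scoped MatrixOrder in
lemma sqrt_mul_self {n 𝕜 : Type*} [Fintype n] [RCLike 𝕜] [DecidableEq n] {A : Matrix n n 𝕜}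
    (hA : PosSemidef A) : hA.sqrt * hA.sqrt = A := by
  rw [sqrt_eq_cfcSqrt]
  exact CFC.sqrt_mul_sqrt_self A hA.nonneg

open scoped MatrixOrder in
lemma eq_sqrt_of_sq_eq {n 𝕜 : Type*} [Fintype n] [RCLike 𝕜] [DecidableEq n]
    {A B : Matrix n n 𝕜} (hB : PosSemidef B) (hA : PosSemidef A) (h : B ^ 2 = A) :
    B = hA.sqrt := by
  rw [sqrt_eq_cfcSqrt, eq_comm, CFC.sqrt_eq_iff A B hA.nonneg hB.nonneg, ← sq, h]

end Matrix.PosSemidef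

/-- **Proposition 1.4 ('prop:trick'), matrix form.**
Let `X : Matrix b' b ℂ`, `Y : Matrix a' a ℂ`, and let `V : Matrix b a ℂ` and
`W : Matrix b' a' ℂ` be unitary isomorphisms (`Vᴴ * V = 1`, `V * Vᴴ = 1`, etc.).
If `X * V = W * Y` then `√(X * Xᴴ) * W = W * √(Y * Yᴴ)`, where `√` is the positive
semidefinite square root. -/
theorem polar_trick_matrix {a a' b b' : Type*}
    [Fintype a] [Fintype a'] [Fintype b] [Fintype b']
    [DecidableEq a] [DecidableEq a'] [DecidableEq b] [DecidableEq b']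
    (X : Matrix b' b ℂ) (Y : Matrix a' a ℂ) (V : Matrix b a ℂ) (W : Matrix b' a' ℂ)
    (hV₁ : Vᴴ * V = 1) (hV₂ : V * Vᴴ = 1) (hW₁ : Wᴴ * W = 1) (hW₂ : W * Wᴴ = 1)
    (hXY : X * V = W * Y) :
    (Matrix.posSemidef_self_mul_conjTranspose X).sqrt * W
      = W * (Matrix.posSemidef_self_mul_conjTranspose Y).sqrt := by
  set hY := Matrix.posSemidef_self_mul_conjTranspose Y
  set hX := Matrix.posSemidef_self_mul_conjTranspose X
  have hps : (W * hY.sqrt * Wᴴ).PosSemidef := hY.posSemidef_sqrt.mul_mul_conjTranspose_same W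
  have hsq : (W * hY.sqrt * Wᴴ) ^ 2 = X * Xᴴ := by
    have h1 : X * Xᴴ = W * (Y * Yᴴ) * Wᴴ := by
      calc X * Xᴴ = (X * V) * (X * V)ᴴ := by
            rw [conjTranspose_mul, Matrix.mul_assoc, ← Matrix.mul_assoc V, hV₂,
              Matrix.one_mul]
        _ = W * (Y * Yᴴ) * Wᴴ := by
            rw [hXY, conjTranspose_mul]
            simp only [Matrix.mul_assoc]
    rw [pow_two]
    calc W * hY.sqrt * Wᴴ * (W * hY.sqrt * Wᴴ)
        = W * (hY.sqrt * (Wᴴ * W) * hY.sqrt) * Wᴴ := by simp only [Matrix.mul_assoc]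
      _ = W * (Y * Yᴴ) * Wᴴ := by rw [hW₁, Matrix.mul_one, hY.sqrt_mul_self]
      _ = X * Xᴴ := h1.symm
  have key : W * hY.sqrt * Wᴴ = hX.sqrt := hps.eq_sqrt_of_sq_eq hX hsq
  calc hX.sqrt * W = W * hY.sqrt * Wᴴ * W := by rw [key]
    _ = W * hY.sqrt := by rw [Matrix.mul_assoc, hW₁, Matrix.mul_one]
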